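/- Every subgroup of the multiplicative semigroup of n×n matrices over the tropical semiring admits a faithful representation by monomial tropical n×n matrices; that is, for every subgroup 𝒢 of (𝕋^{n×n}, ⊗) there exists an injective map ψ from 𝒢 into 𝕋^{n×n} such that ψ(G ⊗ H) = ψ(G) ⊗ ψ(H) for all G, H ∈ 𝒢 and ψ(G) is a monomial matrix for every G ∈ 𝒢. -/

import Mathlib

/-- The tropical (max-plus) semiring carrier: `ℝ ∪ {-∞}`, with `⊥` playing the
role of `-∞`. -/
abbrev Trop : Type := WithBot ℝ

/-- Tropical matrix multiplication: `(A ⊗ B) i j = max_k (A i k + B k j)`. -/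
def tropMulMat {n m p : ℕ} (A : Matrix (Fin n) (Fin m) Trop)
    (B : Matrix (Fin m) (Fin p) Trop) : Matrix (Fin n) (Fin p) Trop :=
  fun i j => Finset.univ.sup fun k => A i k + B k j

/-- A tropical square matrix is monomial if there is a permutation `σ` with
`P i j ≠ -∞ ↔ i = σ j`. -/
def IsMonomial {n : ℕ} (P : Matrix (Fin n) (Fin n) Trop) : Prop :=
  ∃ σ : Equiv.Perm (Fin n), ∀ i j, P i j ≠ ⊥ ↔ i = σ j

/-- A subset of the semigroup of tropical `n×n` matrices which is closed under
tropical matrix multiplication and forms a group under it. -/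
def IsMatSubgroup {n : ℕ} (S : Set (Matrix (Fin n) (Fin n) Trop)) : Prop :=
  (∀ A ∈ S, ∀ B ∈ S, tropMulMat A B ∈ S) ∧
  ∃ E ∈ S, (∀ A ∈ S, tropMulMat E A = A ∧ tropMulMat A E = A) ∧
    ∀ A ∈ S, ∃ B ∈ S, tropMulMat A B = E ∧ tropMulMat B A = E

open Finset

lemma trop_add_max (c x y : Trop) : c + (x ⊔ y) = (c + x) ⊔ (c + y) := by
  rcases le_total x y with h | h
  · rw [sup_eq_right.2 h, sup_eq_right.2 (add_le_add_right h c)]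
  · rw [sup_eq_left.2 h, sup_eq_left.2 (add_le_add_right h c)]

lemma trop_max_add (c x y : Trop) : (x ⊔ y) + c = (x + c) ⊔ (y + c) := by
  rcases le_total x y with h | h
  · rw [sup_eq_right.2 h, sup_eq_right.2 (add_le_add_left h c)]
  · rw [sup_eq_left.2 h, sup_eq_left.2 (add_le_add_left h c)]

lemma trop_add_sup {m : ℕ} (c : Trop) (f : Fin m → Trop) :
    c + univ.sup f = univ.sup fun k => c + f k := by
  have := Finset.comp_sup_eq_sup_comp (s := (univ : Finset (Fin m))) (f := f)
    (fun x => c + x) (fun x y => trop_add_max c x y) (by simp)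
  simpa [Function.comp_def] using this

lemma trop_sup_add {m : ℕ} (c : Trop) (f : Fin m → Trop) :
    univ.sup f + c = univ.sup fun k => f k + c := by
  have := Finset.comp_sup_eq_sup_comp (s := (univ : Finset (Fin m))) (f := f)
    (fun x => x + c) (fun x y => trop_max_add c x y) (by simp)
  simpa [Function.comp_def] using this

lemma entry_le {n m p : ℕ} (A : Matrix (Fin n) (Fin m) Trop)
    (B : Matrix (Fin m) (Fin p) Trop) (i : Fin n) (k : Fin m) (j : Fin p) :
    A i k + B k j ≤ tropMulMat A B i j :=
  Finset.le_sup (f := fun k => A i k + B k j) (mem_univ k)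

lemma tropMul_attain {n m p : ℕ} [NeZero m] (A : Matrix (Fin n) (Fin m) Trop)
    (B : Matrix (Fin m) (Fin p) Trop) (i : Fin n) (j : Fin p) :
    ∃ k, tropMulMat A B i j = A i k + B k j := by
  obtain ⟨k, -, h⟩ := Finset.exists_mem_eq_sup (univ : Finset (Fin m)) univ_nonempty
    (fun k => A i k + B k j)
  exact ⟨k, h⟩

lemma tropMul_assoc {n m p q : ℕ} (A : Matrix (Fin n) (Fin m) Trop)
    (B : Matrix (Fin m) (Fin p) Trop) (C : Matrix (Fin p) (Fin q) Trop) :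
    tropMulMat (tropMulMat A B) C = tropMulMat A (tropMulMat B C) := by
  funext i j
  show univ.sup (fun l => (univ.sup fun k => A i k + B k l) + C l j)
      = univ.sup (fun k => A i k + univ.sup fun l => B k l + C l j)
  calc univ.sup (fun l => (univ.sup fun k => A i k + B k l) + C l j)
      = univ.sup (fun l => univ.sup fun k => (A i k + B k l) + C l j) := by
        refine Finset.sup_congr rfl fun l _ => ?_
        exact trop_sup_add (C l j) (fun k => A i k + B k l)
    _ = univ.sup (fun k => univ.sup fun l => (A i k + B k l) + C l j) := Finset.sup_comm _ _ _
    _ = univ.sup (fun k => A i k + univ.sup fun l => B k l + C l j) := by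
        refine Finset.sup_congr rfl fun k _ => ?_
        rw [trop_add_sup]
        exact Finset.sup_congr rfl fun l _ => add_assoc _ _ _

lemma sup_single {m : ℕ} [NeZero m] (f : Fin m → Trop) (k₀ : Fin m)
    (h : ∀ k, k ≠ k₀ → f k = ⊥) : univ.sup f = f k₀ := by
  refine le_antisymm (Finset.sup_le fun k _ => ?_) (Finset.le_sup (mem_univ _))
  rcases eq_or_ne k k₀ with rfl | h'
  · exact le_rfl
  · simp [h k h']

lemma trop_self_le {a : Trop} (h : a + a ≤ a) : a ≤ 0 := by
  induction a using WithBot.recBotCoe with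
  | bot => exact bot_le
  | coe x =>
    rw [← WithBot.coe_add, WithBot.coe_le_coe] at h
    exact_mod_cast (by linarith : x ≤ (0:ℝ))

lemma trop_two_zero {a : Trop} (h : a + a = 0) : a = 0 := by
  induction a using WithBot.recBotCoe with
  | bot => simp at h
  | coe x =>
    rw [← WithBot.coe_add] at h
    have : x + x = 0 := by exact_mod_cast h
    have : x = 0 := by linarith
    simp [this]

lemma trop_cancel {x : ℝ} {b : Trop} (h : (x : Trop) ≤ (x : Trop) + b) : 0 ≤ b := by
  induction b using WithBot.recBotCoe with
  | bot => simp at h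
  | coe y =>
    rw [← WithBot.coe_add, WithBot.coe_le_coe] at h
    exact_mod_cast (by linarith : (0:ℝ) ≤ y)

lemma trop_left_ne_bot {a b : Trop} (h : a + b ≠ ⊥) : a ≠ ⊥ := by
  intro ha; rw [ha] at h; simp at h

lemma trop_right_ne_bot {a b : Trop} (h : a + b ≠ ⊥) : b ≠ ⊥ := by
  intro hb; rw [hb] at h; simp at h

attribute [local instance] Classical.propDecidable

structure Ctx (n : ℕ) where
  S : Set (Matrix (Fin n) (Fin n) Trop)
  E : Matrix (Fin n) (Fin n) Trop
  hE : E ∈ S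
  mul_mem : ∀ A ∈ S, ∀ B ∈ S, tropMulMat A B ∈ S
  idl : ∀ A ∈ S, tropMulMat E A = A
  idr : ∀ A ∈ S, tropMulMat A E = A
  inv : ∀ A ∈ S, ∃ B ∈ S, tropMulMat A B = E ∧ tropMulMat B A = E

namespace Ctx

variable {n : ℕ} (c : Ctx n)

lemma EE : tropMulMat c.E c.E = c.E := c.idl c.E c.hE

lemma E_le (i k j : Fin n) : c.E i k + c.E k j ≤ c.E i j := by
  conv_rhs => rw [← c.EE]
  exact entry_le _ _ i k j

lemma diag_nonpos (i : Fin n) : c.E i i ≤ 0 := trop_self_le (c.E_le i i i)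

def Rel (i j : Fin n) : Prop := c.E i j + c.E j i = 0

lemma rel_diag {i j : Fin n} (h : c.Rel i j) : c.E i i = 0 :=
  le_antisymm (c.diag_nonpos i) (h ▸ c.E_le i j i)

lemma rel_refl {i : Fin n} (h : c.E i i = 0) : c.Rel i i := by
  unfold Rel; rw [h]; simp

lemma rel_symm {i j : Fin n} (h : c.Rel i j) : c.Rel j i := by
  unfold Rel at h ⊢; rw [add_comm] at h; exact h

lemma rel_trans {i j k : Fin n} (h1 : c.Rel i j) (h2 : c.Rel j k) : c.Rel i k := by
  show c.E i k + c.E k i = 0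
  refine le_antisymm ((c.E_le i k i).trans (c.diag_nonpos i)) ?_
  have : (c.E i j + c.E j k) + (c.E k j + c.E j i) ≤ c.E i k + c.E k i :=
    add_le_add (c.E_le i j k) (c.E_le k j i)
  refine le_trans (le_of_eq ?_) this
  have : (c.E i j + c.E j k) + (c.E k j + c.E j i)
      = (c.E i j + c.E j i) + (c.E j k + c.E k j) := by abel
  rw [this, h1, h2, add_zero]

/-- Key structural lemma for the idempotent `E`: every finite entry factors
through a diagonal-zero node. -/
lemma lemmaA {i j : Fin n} (hij : c.E i j ≠ ⊥) :
    ∃ p, c.E p p = 0 ∧ c.E i p + c.E p j = c.E i j := by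
  haveI : NeZero n := ⟨fun h => (h ▸ i).elim0⟩
  -- step function attaining the sup for E i q
  have hstep : ∀ q : Fin n, ∃ k, c.E i k + c.E k q = c.E i q := by
    intro q
    obtain ⟨k, hk⟩ := tropMul_attain c.E c.E i q
    exact ⟨k, by rw [← hk, c.EE]⟩
  choose step hstep using hstep
  set p : ℕ → Fin n := fun m => step^[m+1] j with hp
  have hsucc : ∀ m, p (m+1) = step (p m) := by
    intro m; simp only [hp]; rw [Function.iterate_succ_apply']
  have inv2 : ∀ m, c.E i (p (m+1)) + c.E (p (m+1)) (p m) = c.E i (p m) := by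
    intro m; rw [hsucc m]; exact hstep (p m)
  have inv1 : ∀ m, c.E i (p m) + c.E (p m) j = c.E i j := by
    intro m
    induction m with
    | zero => exact hstep j
    | succ m ih =>
      refine le_antisymm (c.E_le i (p (m+1)) j) ?_
      calc c.E i j = c.E i (p m) + c.E (p m) j := ih.symm
        _ = (c.E i (p (m+1)) + c.E (p (m+1)) (p m)) + c.E (p m) j := by rw [inv2 m]
        _ = c.E i (p (m+1)) + (c.E (p (m+1)) (p m) + c.E (p m) j) := add_assoc _ _ _
        _ ≤ c.E i (p (m+1)) + c.E (p (m+1)) j :=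
            add_le_add_right (c.E_le (p (m+1)) (p m) j) _
  have hreal : ∀ m, c.E i (p m) ≠ ⊥ := fun m => trop_left_ne_bot (by rw [inv1 m]; exact hij)
  -- pigeonhole
  obtain ⟨a, b, hab, heq⟩ := Finite.exists_ne_map_eq_of_infinite p
  wlog hlt : a < b generalizing a b
  · exact this b a hab.symm heq.symm (hab.lt_or_gt.resolve_left hlt)
  -- chain inequality
  have chain : ∀ d, c.E i (p (a+1+d)) + c.E (p (a+1+d)) (p a) ≤ c.E i (p a) → True := fun _ _ => trivial
  have chain2 : ∀ d, c.E i (p a) ≤ c.E i (p (a+1+d)) + c.E (p (a+1+d)) (p a) := by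
    intro d
    induction d with
    | zero => simpa using (inv2 a).ge
    | succ d ih =>
      have h1 : c.E i (p (a+1+d)) = c.E i (p (a+1+d+1)) + c.E (p (a+1+d+1)) (p (a+1+d)) :=
        (inv2 (a+1+d)).symm
      calc c.E i (p a) ≤ c.E i (p (a+1+d)) + c.E (p (a+1+d)) (p a) := ih
        _ = c.E i (p (a+1+d+1)) + (c.E (p (a+1+d+1)) (p (a+1+d)) + c.E (p (a+1+d)) (p a)) := by
            rw [h1, add_assoc]
        _ ≤ c.E i (p (a+1+d+1)) + c.E (p (a+1+d+1)) (p a) :=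
            add_le_add_right (c.E_le _ _ _) _
  obtain ⟨d, hd⟩ : ∃ d, b = a + 1 + d := ⟨b - (a+1), by omega⟩
  have hkey : c.E i (p a) ≤ c.E i (p a) + c.E (p a) (p a) := by
    have := chain2 d
    rw [← hd, ← heq] at this
    exact this
  obtain ⟨x, hx⟩ := WithBot.ne_bot_iff_exists.1 (hreal a)
  have h0 : (0 : Trop) ≤ c.E (p a) (p a) := by
    rw [← hx] at hkey
    exact trop_cancel hkey
  have hdiag : c.E (p a) (p a) = 0 := le_antisymm (c.diag_nonpos _) h0
  exact ⟨p a, hdiag, inv1 a⟩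

end Ctx

namespace Ctx

variable {n : ℕ} (c : Ctx n)

/-- Representative of the `Rel`-class of `i`. -/
noncomputable def rep (i : Fin n) : Fin n :=
  if h : (Finset.univ.filter (fun j => c.Rel i j)).Nonempty
  then (Finset.univ.filter (fun j => c.Rel i j)).min' h else i

lemma rel_rep {i : Fin n} (h : c.Rel i i) : c.Rel i (c.rep i) := by
  have hne : (Finset.univ.filter (fun j => c.Rel i j)).Nonempty :=
    ⟨i, by simp [h]⟩
  have := Finset.min'_mem _ hne
  rw [Finset.mem_filter] at this
  unfold rep
  rw [dif_pos hne]
  exact this.2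

lemma rep_eq {i j : Fin n} (h : c.Rel i j) : c.rep i = c.rep j := by
  have hset : (Finset.univ.filter (fun k => c.Rel i k)) = (Finset.univ.filter (fun k => c.Rel j k)) := by
    ext k
    simp only [Finset.mem_filter, Finset.mem_univ, true_and]
    exact ⟨fun hk => c.rel_trans (c.rel_symm h) hk, fun hk => c.rel_trans h hk⟩
  have hne1 : (Finset.univ.filter (fun k => c.Rel i k)).Nonempty := ⟨j, by simp [h]⟩
  have hne2 : (Finset.univ.filter (fun k => c.Rel j k)).Nonempty := by rwa [hset] at hne1
  unfold rep
  rw [dif_pos hne1, dif_pos hne2]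
  congr 1

def Rset (i : Fin n) : Prop := c.Rel i i ∧ c.rep i = i

lemma rep_Rset {i : Fin n} (h : c.Rel i i) : c.Rset (c.rep i) := by
  have h1 : c.Rel i (c.rep i) := c.rel_rep h
  refine ⟨c.rel_trans (c.rel_symm h1) h1, ?_⟩
  rw [← c.rep_eq h1]

/-- `k` is a witness for `A` at `i`. -/
def W (A : Matrix (Fin n) (Fin n) Trop) (i k : Fin n) : Prop :=
  ∃ B ∈ c.S, tropMulMat A B = c.E ∧ tropMulMat B A = c.E ∧ A i k + B k i = 0

lemma inv_unique {A B B' : Matrix (Fin n) (Fin n) Trop} (hB : B ∈ c.S) (hB' : B' ∈ c.S)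
    (h2 : tropMulMat B A = c.E) (h3 : tropMulMat A B' = c.E) : B = B' := by
  have : tropMulMat B (tropMulMat A B') = tropMulMat (tropMulMat B A) B' :=
    (tropMul_assoc _ _ _).symm
  rw [h3, h2, c.idr B hB, c.idl B' hB'] at this
  exact this

lemma W_exists {A : Matrix (Fin n) (Fin n) Trop} (hA : A ∈ c.S) {i : Fin n}
    (hi : c.E i i = 0) : ∃ k, c.W A i k := by
  haveI : NeZero n := ⟨fun h => (h ▸ i).elim0⟩
  obtain ⟨B, hB, h1, h2⟩ := c.inv A hA
  obtain ⟨k, hk⟩ := tropMul_attain A B i i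
  refine ⟨k, B, hB, h1, h2, ?_⟩
  rw [← hk, h1, hi]

lemma W_src {A : Matrix (Fin n) (Fin n) Trop} {i k : Fin n} (h : c.W A i k) :
    c.E i i = 0 := by
  obtain ⟨B, hB, h1, h2, h3⟩ := h
  refine le_antisymm (c.diag_nonpos i) ?_
  rw [← h3, ← h1]
  exact entry_le A B i k i

lemma W_tgt {A : Matrix (Fin n) (Fin n) Trop} {i k : Fin n} (h : c.W A i k) :
    c.E k k = 0 := by
  obtain ⟨B, hB, h1, h2, h3⟩ := h
  refine le_antisymm (c.diag_nonpos k) ?_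
  rw [← h2]
  calc (0:Trop) = A i k + B k i := h3.symm
    _ = B k i + A i k := add_comm _ _
    _ ≤ tropMulMat B A k k := entry_le B A k i k

lemma W_nonbot {A : Matrix (Fin n) (Fin n) Trop} {i k : Fin n} (h : c.W A i k) :
    A i k ≠ ⊥ := by
  obtain ⟨B, hB, h1, h2, h3⟩ := h
  exact trop_left_ne_bot (by rw [h3]; exact (by simp : (0:Trop) ≠ ⊥))

lemma W_unique_rel {A : Matrix (Fin n) (Fin n) Trop} {i k l : Fin n}
    (hk : c.W A i k) (hl : c.W A i l) : c.Rel k l := by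
  obtain ⟨B, hB, h1, h2, h3⟩ := hk
  obtain ⟨B', hB', h1', h2', h3'⟩ := hl
  show c.E k l + c.E l k = 0
  have hle : c.E k l + c.E l k ≤ 0 :=
    (c.E_le k l k).trans ((c.W_tgt ⟨B, hB, h1, h2, h3⟩).le)
  have u1 : B k i + A i l ≤ c.E k l := by rw [← h2]; exact entry_le B A k i l
  have u2 : B' l i + A i k ≤ c.E l k := by rw [← h2']; exact entry_le B' A l i k
  have hge : (0:Trop) ≤ c.E k l + c.E l k := by
    calc (0:Trop) = (A i k + B k i) + (A i l + B' l i) := by rw [h3, h3', add_zero]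
      _ = (B k i + A i l) + (B' l i + A i k) := by abel
      _ ≤ c.E k l + c.E l k := add_le_add u1 u2
  exact le_antisymm hle hge

end Ctx

namespace Ctx

variable {n : ℕ} (c : Ctx n)

lemma W_congr_right {A : Matrix (Fin n) (Fin n) Trop} (hA : A ∈ c.S) {i k l : Fin n}
    (hk : c.W A i k) (hkl : c.Rel k l) : c.W A i l := by
  obtain ⟨B, hB, h1, h2, h3⟩ := hk
  refine ⟨B, hB, h1, h2, ?_⟩
  have u1 : A i k + c.E k l ≤ A i l := by
    conv_rhs => rw [← c.idr A hA]
    exact entry_le A c.E i k l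
  have u2 : c.E l k + B k i ≤ B l i := by
    conv_rhs => rw [← c.idl B hB]
    exact entry_le c.E B l k i
  have hge : (0:Trop) ≤ A i l + B l i := by
    calc (0:Trop) = (c.E k l + c.E l k) + (A i k + B k i) := by rw [hkl, h3, add_zero]
      _ = (A i k + c.E k l) + (c.E l k + B k i) := by abel
      _ ≤ A i l + B l i := add_le_add u1 u2
  have hle : A i l + B l i ≤ 0 := by
    calc A i l + B l i ≤ tropMulMat A B i i := entry_le A B i l i
      _ = c.E i i := by rw [h1]
      _ = 0 := c.W_src ⟨B, hB, h1, h2, h3⟩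
  exact le_antisymm hle hge

lemma W_congr_left {A : Matrix (Fin n) (Fin n) Trop} (hA : A ∈ c.S) {i k p : Fin n}
    (hk : c.W A i k) (hip : c.Rel i p) : c.W A p k := by
  obtain ⟨B, hB, h1, h2, h3⟩ := hk
  refine ⟨B, hB, h1, h2, ?_⟩
  have u1 : c.E p i + A i k ≤ A p k := by
    conv_rhs => rw [← c.idl A hA]
    exact entry_le c.E A p i k
  have u2 : B k i + c.E i p ≤ B k p := by
    conv_rhs => rw [← c.idr B hB]
    exact entry_le B c.E k i p
  have hge : (0:Trop) ≤ A p k + B k p := by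
    calc (0:Trop) = (c.E p i + c.E i p) + (A i k + B k i) := by
          rw [c.rel_symm hip, h3, add_zero]
      _ = (c.E p i + A i k) + (B k i + c.E i p) := by abel
      _ ≤ A p k + B k p := add_le_add u1 u2
  have hle : A p k + B k p ≤ 0 := by
    have hpp : c.E p p = 0 := c.rel_diag (c.rel_symm hip)
    calc A p k + B k p ≤ tropMulMat A B p p := entry_le A B p k p
      _ = c.E p p := by rw [h1]
      _ = 0 := hpp
  exact le_antisymm hle hge

lemma W_mul {A C : Matrix (Fin n) (Fin n) Trop} {i k l : Fin n}
    (h1 : c.W A i k) (h2 : c.W C k l) : c.W (tropMulMat A C) i l := by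
  obtain ⟨B, hB, hAB, hBA, hw1⟩ := h1
  obtain ⟨D, hD, hCD, hDC, hw2⟩ := h2
  have hii : c.E i i = 0 := c.W_src ⟨B, hB, hAB, hBA, hw1⟩
  have hX : tropMulMat (tropMulMat A C) (tropMulMat D B) = c.E := by
    rw [tropMul_assoc, ← tropMul_assoc C D B, hCD, c.idl B hB, hAB]
  have hY : tropMulMat (tropMulMat D B) (tropMulMat A C) = c.E := by
    rw [← tropMul_assoc, tropMul_assoc D B A, hBA, c.idr D hD, hDC]
  refine ⟨tropMulMat D B, c.mul_mem D hD B hB, hX, hY, ?_⟩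
  have hge : (0:Trop) ≤ tropMulMat A C i l + tropMulMat D B l i := by
    calc (0:Trop) = (A i k + B k i) + (C k l + D l k) := by rw [hw1, hw2, add_zero]
      _ = (A i k + C k l) + (D l k + B k i) := by abel
      _ ≤ tropMulMat A C i l + tropMulMat D B l i :=
          add_le_add (entry_le A C i k l) (entry_le D B l k i)
  have hle : tropMulMat A C i l + tropMulMat D B l i ≤ 0 := by
    calc tropMulMat A C i l + tropMulMat D B l i
        ≤ tropMulMat (tropMulMat A C) (tropMulMat D B) i i := entry_le _ _ i l i
      _ = c.E i i := by rw [hX]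
      _ = 0 := hii
  exact le_antisymm hle hge

lemma W_E {i : Fin n} (hi : c.E i i = 0) : c.W c.E i i :=
  ⟨c.E, c.hE, c.EE, c.EE, by rw [hi, add_zero]⟩

lemma W_le {A : Matrix (Fin n) (Fin n) Trop} {i k : Fin n} (hk : c.W A i k)
    (q : Fin n) : A i q ≤ A i k + c.E k q := by
  obtain ⟨B, hB, h1, h2, h3⟩ := hk
  have u : B k i + A i q ≤ c.E k q := by
    rw [← h2]; exact entry_le B A k i q
  calc A i q = (A i k + B k i) + A i q := by rw [h3, zero_add]
    _ = A i k + (B k i + A i q) := by abel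
    _ ≤ A i k + c.E k q := add_le_add_right u _

lemma shift {A : Matrix (Fin n) (Fin n) Trop} (hA : A ∈ c.S) {p r : Fin n}
    (hpr : c.Rel p r) (k : Fin n) : A p k ≤ c.E p r + A r k := by
  have u : c.E r p + A p k ≤ A r k := by
    conv_rhs => rw [← c.idl A hA]
    exact entry_le c.E A r p k
  calc A p k = (c.E p r + c.E r p) + A p k := by rw [hpr, zero_add]
    _ = c.E p r + (c.E r p + A p k) := by abel
    _ ≤ c.E p r + A r k := add_le_add_right u _

end Ctx

namespace Ctx

variable {n : ℕ} (c : Ctx n)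

noncomputable def wv (A : Matrix (Fin n) (Fin n) Trop) (i : Fin n) : Fin n :=
  if h : ∃ k, c.W A i k then h.choose else i

lemma wv_W {A : Matrix (Fin n) (Fin n) Trop} {i : Fin n} (h : ∃ k, c.W A i k) :
    c.W A i (c.wv A i) := by
  unfold wv; rw [dif_pos h]; exact h.choose_spec

noncomputable def piM (A : Matrix (Fin n) (Fin n) Trop) (i : Fin n) : Fin n :=
  if c.Rset i then c.rep (c.wv A i) else i

lemma piM_not {A : Matrix (Fin n) (Fin n) Trop} {i : Fin n} (h : ¬ c.Rset i) :
    c.piM A i = i := if_neg h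

lemma piM_W {A : Matrix (Fin n) (Fin n) Trop} (hA : A ∈ c.S) {i : Fin n}
    (h : c.Rset i) : c.W A i (c.piM A i) := by
  have hex : ∃ k, c.W A i k := c.W_exists hA (c.rel_diag h.1)
  have hw := c.wv_W hex
  have hrel : c.Rel (c.wv A i) (c.rep (c.wv A i)) :=
    c.rel_rep (c.rel_refl (c.W_tgt hw))
  have : c.piM A i = c.rep (c.wv A i) := if_pos h
  rw [this]
  exact c.W_congr_right hA hw hrel

lemma piM_Rset {A : Matrix (Fin n) (Fin n) Trop} (hA : A ∈ c.S) {i : Fin n}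
    (h : c.Rset i) : c.Rset (c.piM A i) := by
  have hex : ∃ k, c.W A i k := c.W_exists hA (c.rel_diag h.1)
  have hw := c.wv_W hex
  have : c.piM A i = c.rep (c.wv A i) := if_pos h
  rw [this]
  exact c.rep_Rset (c.rel_refl (c.W_tgt hw))

lemma piM_eq {A : Matrix (Fin n) (Fin n) Trop} {i k : Fin n}
    (h : c.Rset i) (hk : c.W A i k) : c.piM A i = c.rep k := by
  have hex : ∃ k, c.W A i k := ⟨k, hk⟩
  have hw := c.wv_W hex
  have : c.piM A i = c.rep (c.wv A i) := if_pos h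
  rw [this]
  exact c.rep_eq (c.W_unique_rel hw hk)

lemma piM_comp {A C : Matrix (Fin n) (Fin n) Trop} (hA : A ∈ c.S) (hC : C ∈ c.S)
    (i : Fin n) : c.piM (tropMulMat A C) i = c.piM C (c.piM A i) := by
  by_cases h : c.Rset i
  · have hk := c.piM_W hA h
    have hkR := c.piM_Rset hA h
    have hl := c.piM_W hC hkR
    have hlR := c.piM_Rset hC hkR
    have := c.W_mul hk hl
    rw [c.piM_eq h this, hlR.2]
  · rw [c.piM_not h, c.piM_not h, c.piM_not h]

lemma piM_invol {A B : Matrix (Fin n) (Fin n) Trop} (hA : A ∈ c.S) (hB : B ∈ c.S)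
    (hAB : tropMulMat A B = c.E) (hBA : tropMulMat B A = c.E) (i : Fin n) :
    c.piM B (c.piM A i) = i := by
  by_cases h : c.Rset i
  · have hk := c.piM_W hA h
    have hkR := c.piM_Rset hA h
    obtain ⟨B', hB', h1, h2, h3⟩ := hk
    have hBB : B' = B := c.inv_unique hB' hB h2 hAB
    rw [hBB] at h3
    have hW : c.W B (c.piM A i) i := ⟨A, hA, hBA, hAB, by rw [add_comm]; exact h3⟩
    rw [c.piM_eq hkR hW, h.2]
  · rw [c.piM_not h, c.piM_not h]

noncomputable def psi (A : Matrix (Fin n) (Fin n) Trop) :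
    Matrix (Fin n) (Fin n) Trop := fun i j =>
  if c.Rset i then (if j = c.piM A i then A i j else ⊥)
  else (if j = i then (0:Trop) else ⊥)

lemma psi_nonbot_iff {A : Matrix (Fin n) (Fin n) Trop} (hA : A ∈ c.S) (i j : Fin n) :
    c.psi A i j ≠ ⊥ ↔ j = c.piM A i := by
  unfold psi
  by_cases h : c.Rset i
  · rw [if_pos h]
    constructor
    · intro hne
      by_contra hne'
      rw [if_neg hne'] at hne
      exact hne rfl
    · intro hj
      rw [if_pos hj, hj]
      exact c.W_nonbot (c.piM_W hA h)
  · rw [if_neg h, c.piM_not h]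
    constructor
    · intro hne
      by_contra hne'
      rw [if_neg hne'] at hne
      exact hne rfl
    · intro hj
      rw [if_pos hj]
      exact (by simp : (0:Trop) ≠ ⊥)

lemma psi_bot_of_ne {A : Matrix (Fin n) (Fin n) Trop} {i k : Fin n}
    (hk : k ≠ c.piM A i) : c.psi A i k = ⊥ := by
  unfold psi
  by_cases h : c.Rset i
  · rw [if_pos h, if_neg hk]
  · rw [if_neg h, if_neg (by rwa [c.piM_not h] at hk)]

lemma psi_mul {A C : Matrix (Fin n) (Fin n) Trop} (hA : A ∈ c.S) (hC : C ∈ c.S) :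
    c.psi (tropMulMat A C) = tropMulMat (c.psi A) (c.psi C) := by
  funext i j
  haveI : NeZero n := ⟨fun h => (h ▸ i).elim0⟩
  set k₀ := c.piM A i with hk₀
  have hsup : tropMulMat (c.psi A) (c.psi C) i j = c.psi A i k₀ + c.psi C k₀ j := by
    refine sup_single _ k₀ fun k hk => ?_
    rw [c.psi_bot_of_ne hk, WithBot.bot_add]
  rw [hsup]
  by_cases h : c.Rset i
  · have hpsiA : c.psi A i k₀ = A i k₀ := by unfold psi; rw [if_pos h, if_pos rfl]
    have hk₀R : c.Rset k₀ := c.piM_Rset hA h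
    have hcomp : c.piM (tropMulMat A C) i = c.piM C k₀ := c.piM_comp hA hC i
    by_cases hj : j = c.piM C k₀
    · have hL : c.psi (tropMulMat A C) i j = tropMulMat A C i j := by
        unfold psi; rw [if_pos h, if_pos (by rw [hcomp]; exact hj)]
      have hR : c.psi C k₀ j = C k₀ j := by
        unfold psi; rw [if_pos hk₀R, if_pos hj]
      rw [hL, hpsiA, hR]
      refine le_antisymm (Finset.sup_le fun m _ => ?_) (entry_le A C i k₀ j)
      have u1 : A i m ≤ A i k₀ + c.E k₀ m := c.W_le (c.piM_W hA h) m
      have u2 : c.E k₀ m + C m j ≤ C k₀ j := by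
        conv_rhs => rw [← c.idl C hC]
        exact entry_le c.E C k₀ m j
      calc A i m + C m j ≤ (A i k₀ + c.E k₀ m) + C m j := add_le_add_left u1 _
        _ = A i k₀ + (c.E k₀ m + C m j) := add_assoc _ _ _
        _ ≤ A i k₀ + C k₀ j := add_le_add_right u2 _
    · have hL : c.psi (tropMulMat A C) i j = ⊥ :=
        c.psi_bot_of_ne (by rw [hcomp]; exact hj)
      have hR : c.psi C k₀ j = ⊥ := c.psi_bot_of_ne hj
      rw [hL, hR, WithBot.add_bot]
  · have hk₀i : k₀ = i := c.piM_not h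
    have hpsiA : c.psi A i k₀ = 0 := by
      unfold psi; rw [if_neg h, if_pos hk₀i]
    rw [hpsiA, hk₀i, zero_add]
    unfold psi
    rw [if_neg h, if_neg h]

lemma psi_monomial {A : Matrix (Fin n) (Fin n) Trop} (hA : A ∈ c.S) :
    IsMonomial (c.psi A) := by
  obtain ⟨B, hB, hAB, hBA⟩ := c.inv A hA
  refine ⟨⟨c.piM B, c.piM A, fun j => c.piM_invol hB hA hBA hAB j,
    fun i => c.piM_invol hA hB hAB hBA i⟩, fun i j => ?_⟩
  rw [c.psi_nonbot_iff hA]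
  constructor
  · intro hj
    show i = c.piM B j
    rw [hj, c.piM_invol hA hB hAB hBA]
  · intro hi
    have : i = c.piM B j := hi
    rw [this, c.piM_invol hB hA hBA hAB]

lemma psi_le {A C : Matrix (Fin n) (Fin n) Trop} (hA : A ∈ c.S) (hC : C ∈ c.S)
    (h : c.psi A = c.psi C) (i j : Fin n) : A i j ≤ C i j := by
  by_cases hb : A i j = ⊥
  · rw [hb]; exact bot_le
  haveI : NeZero n := ⟨fun hzero => (hzero ▸ i).elim0⟩
  -- attain the sup in A = E ⊗ A
  obtain ⟨p₁, hp₁⟩ : ∃ p₁, A i j = c.E i p₁ + A p₁ j := by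
    obtain ⟨p₁, h₁⟩ := tropMul_attain c.E A i j
    exact ⟨p₁, by rw [← h₁, c.idl A hA]⟩
  have hEip₁ : c.E i p₁ ≠ ⊥ := trop_left_ne_bot (by rw [← hp₁]; exact hb)
  obtain ⟨p, hpp, hfac⟩ := c.lemmaA hEip₁
  have b1 : A i j ≤ c.E i p + A p j := by
    have u : c.E p p₁ + A p₁ j ≤ A p j := by
      conv_rhs => rw [← c.idl A hA]
      exact entry_le c.E A p p₁ j
    calc A i j = (c.E i p + c.E p p₁) + A p₁ j := by rw [hfac, ← hp₁]
      _ = c.E i p + (c.E p p₁ + A p₁ j) := add_assoc _ _ _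
      _ ≤ c.E i p + A p j := add_le_add_right u _
  set r := c.rep p with hr
  have hrp : c.Rel p r := c.rel_rep (c.rel_refl hpp)
  have hRr : c.Rset r := c.rep_Rset (c.rel_refl hpp)
  set k := c.piM A r with hk
  have hWk : c.W A r k := c.piM_W hA hRr
  have hWpk : c.W A p k := c.W_congr_left hA hWk (c.rel_symm hrp)
  have b2 : A p j ≤ A p k + c.E k j := c.W_le hWpk j
  have b3 : A p k ≤ c.E p r + A r k := c.shift hA hrp k
  -- identify with C
  have hpiz : c.piM A r = c.piM C r := by
    have h1 : c.psi A r (c.piM A r) ≠ ⊥ := by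
      rw [c.psi_nonbot_iff hA]
    have h2 : c.psi C r (c.piM A r) ≠ ⊥ := by rw [← h]; exact h1
    exact (c.psi_nonbot_iff hC r _).1 h2
  have hval : A r k = C r k := by
    have h1 : c.psi A r k = A r k := by
      unfold psi; rw [if_pos hRr, if_pos hk]
    have h2 : c.psi C r k = C r k := by
      unfold psi; rw [if_pos hRr, if_pos (by rw [hk, hpiz])]
    rw [← h1, h, h2]
  have b4 : c.E i r + (C r k + c.E k j) ≤ C i j := by
    have u1 : c.E i r + C r k ≤ tropMulMat c.E C i k := entry_le c.E C i r k
    rw [c.idl C hC] at u1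
    have u2 : C i k + c.E k j ≤ tropMulMat C c.E i j := entry_le C c.E i k j
    rw [c.idr C hC] at u2
    calc c.E i r + (C r k + c.E k j) = (c.E i r + C r k) + c.E k j := (add_assoc _ _ _).symm
      _ ≤ C i k + c.E k j := add_le_add_left u1 _
      _ ≤ C i j := u2
  have b5 : c.E i p + c.E p r ≤ c.E i r := c.E_le i p r
  calc A i j ≤ c.E i p + A p j := b1
    _ ≤ c.E i p + (A p k + c.E k j) := add_le_add_right b2 _
    _ ≤ c.E i p + ((c.E p r + A r k) + c.E k j) :=
        add_le_add_right (add_le_add_left b3 _) _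
    _ = (c.E i p + c.E p r) + (A r k + c.E k j) := by abel
    _ ≤ c.E i r + (A r k + c.E k j) := add_le_add_left b5 _
    _ = c.E i r + (C r k + c.E k j) := by rw [hval]
    _ ≤ C i j := b4

lemma psi_injOn : Set.InjOn c.psi c.S := by
  intro A hA C hC h
  funext i j
  exact le_antisymm (c.psi_le hA hC h i j) (c.psi_le hC hA h.symm i j)

end Ctx

theorem monomial_faithful_rep {n : ℕ}
    (S : Set (Matrix (Fin n) (Fin n) Trop)) (hS : IsMatSubgroup S) :
    ∃ ψ : Matrix (Fin n) (Fin n) Trop → Matrix (Fin n) (Fin n) Trop,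
      Set.InjOn ψ S ∧
      (∀ G ∈ S, ∀ H ∈ S, ψ (tropMulMat G H) = tropMulMat (ψ G) (ψ H)) ∧
      ∀ G ∈ S, IsMonomial (ψ G) := by
  obtain ⟨hmul, E, hE, hid, hinv⟩ := hS
  let c : Ctx n := ⟨S, E, hE, hmul, fun A hA => (hid A hA).1,
    fun A hA => (hid A hA).2, hinv⟩
  exact ⟨c.psi, c.psi_injOn, fun G hG H hH => c.psi_mul hG hH,
    fun G hG => c.psi_monomial hG⟩
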